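/- Assume conditions (J) and (J1) and let h be a KPP nonlinearity. Then the Neumann stationary problem d∫_Ω J(x−y)(U(y) − U(x))dy − q U'(x) + U(x)h(x,U(x)) = 0 on Ω with U(l₁) = 0 has at most one nontrivial solution: if U₁ and U₂ are nontrivial solutions, then U₁ ≡ U₂ on [l₁,l₂]. -/

import Mathlib

open MeasureTheory

/-- `U` is a nontrivial solution of the Neumann stationary problem
`d∫_Ω J(x−y)(U(y) − U(x))dy − q U'(x) + U(x)h(x,U(x)) = 0` on `Ω` with
`U(l₁) = 0`: bounded, continuous, nonnegative on `[l₁,l₂]`, differentiable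
on `Ω`, and not identically zero. -/
def NeumannStatSol (l₁ l₂ d q : ℝ) (J : ℝ → ℝ) (h : ℝ → ℝ → ℝ) (U : ℝ → ℝ) : Prop :=
  ContinuousOn U (Set.Icc l₁ l₂) ∧
  (∃ C, ∀ x ∈ Set.Icc l₁ l₂, |U x| ≤ C) ∧
  (∀ x ∈ Set.Icc l₁ l₂, 0 ≤ U x) ∧
  (∀ x ∈ Set.Ioo l₁ l₂, DifferentiableAt ℝ U x) ∧
  (∃ x ∈ Set.Icc l₁ l₂, U x ≠ 0) ∧
  U l₁ = 0 ∧
  ∀ x ∈ Set.Ioo l₁ l₂,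
    d * (∫ y in Set.Ioo l₁ l₂, J (x - y) * (U y - U x)) - q * deriv U x
      + U x * h x (U x) = 0

open Set


section helpers
variable {l₁ l₂ : ℝ} (J : ℝ → ℝ)

lemma integrableOn_conv (hJc : Continuous J) {f : ℝ → ℝ}
    (hf : ContinuousOn f (Icc l₁ l₂)) (x : ℝ) :
    IntegrableOn (fun y => J (x - y) * f y) (Ioo l₁ l₂) := by
  have : ContinuousOn (fun y => J (x - y) * f y) (Icc l₁ l₂) :=
    ((hJc.comp (continuous_const.sub continuous_id)).continuousOn).mul hf
  exact this.integrableOn_Icc.mono_set Ioo_subset_Icc_self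

lemma continuous_conv (hJc : Continuous J) (hJnn : ∀ x, 0 ≤ J x)
    (hJbdd : ∃ C, ∀ x, J x ≤ C) {f : ℝ → ℝ}
    (hf : ContinuousOn f (Icc l₁ l₂)) :
    Continuous (fun x => ∫ y in Ioo l₁ l₂, J (x - y) * f y) := by
  obtain ⟨C, hC⟩ := hJbdd
  refine continuous_iff_continuousAt.2 fun x₀ => ?_
  refine continuousAt_of_dominated (F := fun x y => J (x - y) * f y)
    (bound := fun y => C * |f y|) ?_ ?_ ?_ ?_
  · exact Filter.Eventually.of_forall fun x =>
      (integrableOn_conv J hJc hf x).aestronglyMeasurable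
  · refine Filter.Eventually.of_forall fun x => ?_
    refine Filter.Eventually.of_forall fun y => ?_
    have h1 : |J (x - y) * f y| = J (x - y) * |f y| := by
      rw [abs_mul, abs_of_nonneg (hJnn _)]
    rw [Real.norm_eq_abs, h1]
    exact mul_le_mul_of_nonneg_right (hC _) (abs_nonneg _)
  · have h1 : IntegrableOn (fun y => |f y|) (Icc l₁ l₂) volume :=
      hf.abs.integrableOn_Icc
    have h2 : IntegrableOn (fun y => C * |f y|) (Icc l₁ l₂) volume :=
      Integrable.const_mul h1 C
    exact h2.mono_set Ioo_subset_Icc_self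
  · exact Filter.Eventually.of_forall fun y =>
      ((hJc.comp (continuous_id.sub continuous_const)).mul continuous_const).continuousAt

lemma conv_pos (hl : l₁ < l₂) {f : ℝ → ℝ} (hf : ContinuousOn f (Icc l₁ l₂))
    (hnn : ∀ y ∈ Ioo l₁ l₂, 0 ≤ f y) {y₀ : ℝ} (hy₀ : y₀ ∈ Ioo l₁ l₂)
    (hpos : 0 < f y₀) : 0 < ∫ y in Ioo l₁ l₂, f y := by
  have hint : IntegrableOn f (Ioo l₁ l₂) :=
    hf.integrableOn_Icc.mono_set Ioo_subset_Icc_self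
  rw [setIntegral_pos_iff_support_of_nonneg_ae ?_ hint]
  · have hca : ContinuousAt f y₀ :=
      hf.continuousAt (Icc_mem_nhds hy₀.1 hy₀.2)
    have hev : {y | 0 < f y} ∈ nhds y₀ := hca.eventually (eventually_gt_nhds hpos)
    obtain ⟨ε, hε, hball⟩ := Metric.mem_nhds_iff.1 (Filter.inter_mem hev (Ioo_mem_nhds hy₀.1 hy₀.2))
    have hsub : Ioo (y₀ - ε) (y₀ + ε) ⊆ Function.support f ∩ Ioo l₁ l₂ := by
      intro z hz
      have : z ∈ Metric.ball y₀ ε := by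
        rw [Metric.mem_ball, Real.dist_eq, abs_sub_lt_iff]
        constructor <;> linarith [hz.1, hz.2]
      have h2 := hball this
      exact ⟨ne_of_gt h2.1, h2.2⟩
    calc (0 : ENNReal) < volume (Ioo (y₀ - ε) (y₀ + ε)) := by
            rw [Real.volume_Ioo]; simp; linarith
      _ ≤ volume (Function.support f ∩ Ioo l₁ l₂) := measure_mono hsub
  · exact (ae_restrict_iff' measurableSet_Ioo).2 (Filter.Eventually.of_forall hnn)
end helpers

section helpers2
variable {l₁ l₂ : ℝ} (J : ℝ → ℝ)

lemma conv_linear (hJc : Continuous J) {f g : ℝ → ℝ}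
    (hf : ContinuousOn f (Icc l₁ l₂)) (hg : ContinuousOn g (Icc l₁ l₂)) (K x : ℝ) :
    ∫ y in Ioo l₁ l₂, J (x - y) * (K * f y - g y)
      = K * (∫ y in Ioo l₁ l₂, J (x - y) * f y) - ∫ y in Ioo l₁ l₂, J (x - y) * g y := by
  have h1 : ∀ y, J (x - y) * (K * f y - g y)
      = K * (J (x - y) * f y) - J (x - y) * g y := fun y => by ring
  simp only [h1]
  rw [integral_sub (((integrableOn_conv J hJc hf x)).const_mul K)
    (integrableOn_conv J hJc hg x), MeasureTheory.integral_const_mul]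

lemma nhdsWithin_Ioo_neBot (hl : l₁ < l₂) {p : ℝ} (hp : p ∈ Icc l₁ l₂) :
    (nhdsWithin p (Ioo l₁ l₂)).NeBot := by
  rw [← mem_closure_iff_nhdsWithin_neBot]
  rwa [closure_Ioo (ne_of_lt hl)]

lemma eq_zero_on_Icc (hl : l₁ < l₂) {f : ℝ → ℝ} (hf : ContinuousOn f (Icc l₁ l₂))
    (h0 : ∀ x ∈ Ioo l₁ l₂, f x = 0) : ∀ x ∈ Icc l₁ l₂, f x = 0 := by
  intro x hx
  have hne := nhdsWithin_Ioo_neBot hl hx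
  have h1 : Filter.Tendsto f (nhdsWithin x (Ioo l₁ l₂)) (nhds (f x)) :=
    (hf x hx).mono Ioo_subset_Icc_self
  have h2 : Filter.Tendsto f (nhdsWithin x (Ioo l₁ l₂)) (nhds 0) := by
    refine Filter.Tendsto.congr' ?_ tendsto_const_nhds
    filter_upwards [self_mem_nhdsWithin] with y hy using (h0 y hy).symm
  exact tendsto_nhds_unique h1 h2

lemma tendsto_deriv_of_eq (hl : l₁ < l₂) {f Φ : ℝ → ℝ}
    (hrepr : ∀ x ∈ Ioo l₁ l₂, deriv f x = Φ x) {p : ℝ} (hp : p ∈ Icc l₁ l₂)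
    (hΦ : ContinuousWithinAt Φ (Icc l₁ l₂) p) :
    Filter.Tendsto (deriv f) (nhdsWithin p (Ioo l₁ l₂)) (nhds (Φ p)) := by
  have h1 : Filter.Tendsto Φ (nhdsWithin p (Ioo l₁ l₂)) (nhds (Φ p)) :=
    hΦ.mono Ioo_subset_Icc_self
  refine h1.congr' ?_
  filter_upwards [self_mem_nhdsWithin] with y hy using (hrepr y hy).symm

lemma no_zero_at_right (hl : l₁ < l₂) {f : ℝ → ℝ}
    (hfc : ContinuousOn f (Icc l₁ l₂))
    (hfd : ∀ x ∈ Ioo l₁ l₂, DifferentiableAt ℝ f x)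
    (hfpos : ∀ x ∈ Ioo l₁ l₂, 0 < f x) (hfl₂ : f l₂ = 0) {L : ℝ} (hL : 0 < L)
    (ht : Filter.Tendsto (deriv f) (nhdsWithin l₂ (Ioo l₁ l₂)) (nhds L)) : False := by
  have hev : ∀ᶠ z in nhdsWithin l₂ (Ioo l₁ l₂), 0 < deriv f z :=
    ht.eventually (eventually_gt_nhds hL)
  rw [eventually_nhdsWithin_iff] at hev
  obtain ⟨ε, hε, hball⟩ := Metric.eventually_nhds_iff_ball.1 hev
  set x : ℝ := max ((l₁ + l₂) / 2) (l₂ - ε / 2) with hxdef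
  have hx1 : l₁ < x := lt_max_of_lt_left (by linarith)
  have hx2 : x < l₂ := max_lt (by linarith) (by linarith)
  have hxe : l₂ - x < ε := by
    have : l₂ - ε / 2 ≤ x := le_max_right _ _
    linarith
  obtain ⟨c, hc, hderiv⟩ := exists_deriv_eq_slope f hx2
    (hfc.mono (Icc_subset_Icc (le_of_lt hx1) le_rfl))
    (fun z hz => (hfd z ⟨lt_trans hx1 hz.1, hz.2⟩).differentiableWithinAt)
  have hcball : c ∈ Metric.ball l₂ ε := by
    rw [Metric.mem_ball, Real.dist_eq, abs_sub_lt_iff]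
    constructor <;> [linarith [hc.2]; linarith [hc.1, hxe]]
  have hcIoo : c ∈ Ioo l₁ l₂ := ⟨lt_trans hx1 hc.1, hc.2⟩
  have hpos := hball c hcball hcIoo
  rw [hderiv, hfl₂] at hpos
  have := hfpos x ⟨hx1, hx2⟩
  have hd : (0 - f x) / (l₂ - x) < 0 := div_neg_of_neg_of_pos (by linarith) (by linarith)
  linarith

lemma linear_bounds (hl : l₁ < l₂) {f : ℝ → ℝ}
    (hfc : ContinuousOn f (Icc l₁ l₂))
    (hfd : ∀ x ∈ Ioo l₁ l₂, DifferentiableAt ℝ f x)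
    (hf0 : f l₁ = 0) {L : ℝ}
    (ht : Filter.Tendsto (deriv f) (nhdsWithin l₁ (Ioo l₁ l₂)) (nhds L))
    {ε : ℝ} (hε : 0 < ε) :
    ∃ δ > 0, ∀ x ∈ Ioo l₁ l₂, x - l₁ < δ →
      (L - ε) * (x - l₁) ≤ f x ∧ f x ≤ (L + ε) * (x - l₁) := by
  have hev : ∀ᶠ z in nhdsWithin l₁ (Ioo l₁ l₂), L - ε < deriv f z ∧ deriv f z < L + ε := by
    refine ht.eventually (p := fun z => L - ε < z ∧ z < L + ε) ?_
    filter_upwards [eventually_gt_nhds (show L - ε < L by linarith),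
      eventually_lt_nhds (show L < L + ε by linarith)] with z h1 h2 using ⟨h1, h2⟩
  rw [eventually_nhdsWithin_iff] at hev
  obtain ⟨δ, hδ, hball⟩ := Metric.eventually_nhds_iff_ball.1 hev
  refine ⟨δ, hδ, fun x hx hxδ => ?_⟩
  obtain ⟨c, hc, hderiv⟩ := exists_deriv_eq_slope f hx.1
    (hfc.mono (Icc_subset_Icc le_rfl (le_of_lt hx.2)))
    (fun z hz => (hfd z ⟨hz.1, lt_trans hz.2 hx.2⟩).differentiableWithinAt)
  have hcball : c ∈ Metric.ball l₁ δ := by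
    rw [Metric.mem_ball, Real.dist_eq, abs_sub_lt_iff]
    constructor <;> [linarith [hc.1, hc.2]; linarith [hc.1]]
  have hcIoo : c ∈ Ioo l₁ l₂ := ⟨hc.1, lt_trans hc.2 hx.2⟩
  have hbd := hball c hcball hcIoo
  rw [hf0, sub_zero] at hderiv
  have hxl : 0 < x - l₁ := by linarith [hx.1]
  have hfx : f x = deriv f c * (x - l₁) := by
    field_simp at hderiv
    linarith [hderiv]
  rw [hfx]
  constructor
  · exact mul_le_mul_of_nonneg_right (le_of_lt hbd.1) (le_of_lt hxl)
  · exact mul_le_mul_of_nonneg_right (le_of_lt hbd.2) (le_of_lt hxl)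

end helpers2

section sol
variable {l₁ l₂ d q : ℝ} {J : ℝ → ℝ} {h : ℝ → ℝ → ℝ} {U : ℝ → ℝ}

lemma sol_pos (hl : l₁ < l₂) (hd : 0 < d) (hq : 0 < q)
    (hJc : Continuous J) (hJnn : ∀ x, 0 ≤ J x) (hJ0 : 0 < J 0)
    (hUc : ContinuousOn U (Icc l₁ l₂))
    (hUnn : ∀ x ∈ Icc l₁ l₂, 0 ≤ U x)
    (hUd : ∀ x ∈ Ioo l₁ l₂, DifferentiableAt ℝ U x)
    (hUnt : ∃ x ∈ Icc l₁ l₂, U x ≠ 0)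
    (hUeq : ∀ x ∈ Ioo l₁ l₂,
      d * (∫ y in Ioo l₁ l₂, J (x - y) * (U y - U x)) - q * deriv U x
        + U x * h x (U x) = 0) :
    ∀ x ∈ Ioo l₁ l₂, 0 < U x := by
  -- δ such that J > 0 on the ball of radius δ
  obtain ⟨δ, hδ, hJball⟩ := Metric.eventually_nhds_iff_ball.1
    ((hJc.continuousAt (x := 0)).eventually (eventually_gt_nhds hJ0))
  have hJpos : ∀ z : ℝ, |z| < δ → 0 < J z := by
    intro z hz
    exact hJball z (by rwa [Metric.mem_ball, Real.dist_eq, sub_zero])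
  set Z : Set ℝ := {x | x ∈ Ioo l₁ l₂ ∧ U x = 0} with hZdef
  set P : Set ℝ := {x | x ∈ Ioo l₁ l₂ ∧ U x ≠ 0} with hPdef
  have hZopen : IsOpen Z := by
    rw [isOpen_iff_mem_nhds]
    rintro x₀ ⟨hx₀, hUx₀⟩
    -- x₀ is a local min, so deriv = 0
    have hmin : IsLocalMin U x₀ := by
      filter_upwards [Icc_mem_nhds hx₀.1 hx₀.2] with y hy
      rw [hUx₀]; exact hUnn y hy
    have hderiv : deriv U x₀ = 0 := hmin.deriv_eq_zero
    have heq := hUeq x₀ hx₀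
    rw [hderiv, hUx₀] at heq
    simp only [sub_zero, mul_zero, zero_mul, add_zero] at heq
    have hint0 : (∫ y in Ioo l₁ l₂, J (x₀ - y) * U y) = 0 := by
      have := heq
      nlinarith
    -- U = 0 on ball x₀ δ ∩ Ioo
    have hU0near : ∀ y ∈ Metric.ball x₀ δ ∩ Ioo l₁ l₂, U y = 0 := by
      intro y ⟨hyb, hyI⟩
      by_contra hUy
      have hUypos : 0 < U y := lt_of_le_of_ne (hUnn y (Ioo_subset_Icc_self hyI)) (Ne.symm hUy)
      have hJy : 0 < J (x₀ - y) := by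
        apply hJpos
        rw [Metric.mem_ball, Real.dist_eq] at hyb
        rwa [abs_sub_comm]
      have : 0 < ∫ y in Ioo l₁ l₂, J (x₀ - y) * U y := by
        refine conv_pos hl ?_ ?_ hyI (mul_pos hJy hUypos)
        · exact ((hJc.comp (continuous_const.sub continuous_id)).continuousOn).mul hUc
        · intro z hz
          exact mul_nonneg (hJnn _) (hUnn z (Ioo_subset_Icc_self hz))
      rw [hint0] at this; exact lt_irrefl 0 this
    have : Metric.ball x₀ δ ∩ Ioo l₁ l₂ ⊆ Z := fun y hy => ⟨hy.2, hU0near y hy⟩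
    exact Filter.mem_of_superset
      (Filter.inter_mem (Metric.ball_mem_nhds x₀ hδ) (Ioo_mem_nhds hx₀.1 hx₀.2)) this
  have hPopen : IsOpen P := by
    rw [isOpen_iff_mem_nhds]
    rintro x₀ ⟨hx₀, hUx₀⟩
    have hca : ContinuousAt U x₀ := hUc.continuousAt (Icc_mem_nhds hx₀.1 hx₀.2)
    have hev : ∀ᶠ y in nhds x₀, U y ≠ 0 := hca.eventually_ne hUx₀
    filter_upwards [hev, Ioo_mem_nhds hx₀.1 hx₀.2] with y h1 h2 using ⟨h2, h1⟩
  by_cases hZne : Z.Nonempty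
  · exfalso
    have hsub : Ioo l₁ l₂ ⊆ Z := by
      refine (isPreconnected_Ioo).subset_left_of_subset_union hZopen hPopen ?_ ?_ ?_
      · rw [Set.disjoint_iff]
        rintro x ⟨⟨_, h1⟩, ⟨_, h2⟩⟩
        exact h2 h1
      · intro x hx
        by_cases hU : U x = 0
        · exact Or.inl ⟨hx, hU⟩
        · exact Or.inr ⟨hx, hU⟩
      · obtain ⟨z, hz⟩ := hZne
        exact ⟨z, hz.1, hz⟩
    have h0 : ∀ x ∈ Icc l₁ l₂, U x = 0 :=
      eq_zero_on_Icc hl hUc (fun x hx => (hsub hx).2)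
    obtain ⟨x, hx, hU⟩ := hUnt
    exact hU (h0 x hx)
  · intro x hx
    refine lt_of_le_of_ne (hUnn x (Ioo_subset_Icc_self hx)) (Ne.symm ?_)
    intro hU
    exact hZne ⟨x, hx, hU⟩

end sol

section sol2
variable {l₁ l₂ d q : ℝ} {J : ℝ → ℝ} {h : ℝ → ℝ → ℝ} {U : ℝ → ℝ}

lemma integral_split (hJc : Continuous J) (hUc : ContinuousOn U (Icc l₁ l₂)) (x : ℝ) :
    (∫ y in Ioo l₁ l₂, J (x - y) * (U y - U x))
      = (∫ y in Ioo l₁ l₂, J (x - y) * U y)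
        - (∫ y in Ioo l₁ l₂, J (x - y) * 1) * U x := by
  have hi1 := integrableOn_conv J hJc hUc x
  have hi2 : IntegrableOn (fun y => J (x - y) * 1) (Ioo l₁ l₂) :=
    integrableOn_conv J hJc continuousOn_const x
  calc (∫ y in Ioo l₁ l₂, J (x - y) * (U y - U x))
      = ∫ y in Ioo l₁ l₂, (J (x - y) * U y - (J (x - y) * 1) * U x) := by
        congr 1; funext y; ring
    _ = (∫ y in Ioo l₁ l₂, J (x - y) * U y)
        - ∫ y in Ioo l₁ l₂, (J (x - y) * 1) * U x :=
        integral_sub hi1 (hi2.mul_const (U x))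
    _ = _ := by rw [integral_mul_const]

lemma deriv_repr (hq : 0 < q) (hJc : Continuous J)
    (hUc : ContinuousOn U (Icc l₁ l₂))
    (hUeq : ∀ x ∈ Ioo l₁ l₂,
      d * (∫ y in Ioo l₁ l₂, J (x - y) * (U y - U x)) - q * deriv U x
        + U x * h x (U x) = 0) :
    ∀ x ∈ Ioo l₁ l₂, deriv U x =
      (d * (∫ y in Ioo l₁ l₂, J (x - y) * U y)
        - d * U x * (∫ y in Ioo l₁ l₂, J (x - y) * 1) + U x * h x (U x)) / q := by
  intro x hx
  have heq := hUeq x hx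
  rw [integral_split hJc hUc x] at heq
  rw [eq_div_iff (ne_of_gt hq)]
  linear_combination -heq

lemma contWithin_h (hUc : ContinuousOn U (Icc l₁ l₂))
    (hUnn : ∀ x ∈ Icc l₁ l₂, 0 ≤ U x)
    (hhC : ContinuousOn (fun p : ℝ × ℝ => h p.1 p.2) (Icc l₁ l₂ ×ˢ Ici 0))
    {p : ℝ} (hp : p ∈ Icc l₁ l₂) :
    ContinuousWithinAt (fun x => h x (U x)) (Icc l₁ l₂) p := by
  have h1 : ContinuousWithinAt (fun x => ((x : ℝ), U x)) (Icc l₁ l₂) p :=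
    (continuousWithinAt_id).prodMk (hUc p hp)
  have h2 : ContinuousWithinAt ((fun pr : ℝ × ℝ => h pr.1 pr.2) ∘ (fun x => (x, U x)))
      (Icc l₁ l₂) p :=
    ContinuousWithinAt.comp (hhC (p, U p) ⟨hp, hUnn p hp⟩) h1
      (fun x hx => ⟨hx, hUnn x hx⟩)
  exact h2

lemma phiU_contWithin (hJc : Continuous J) (hJnn : ∀ x, 0 ≤ J x)
    (hJbdd : ∃ C, ∀ x, J x ≤ C)
    (hUc : ContinuousOn U (Icc l₁ l₂))
    (hUnn : ∀ x ∈ Icc l₁ l₂, 0 ≤ U x)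
    (hhC : ContinuousOn (fun p : ℝ × ℝ => h p.1 p.2) (Icc l₁ l₂ ×ˢ Ici 0))
    {p : ℝ} (hp : p ∈ Icc l₁ l₂) :
    ContinuousWithinAt (fun x =>
      (d * (∫ y in Ioo l₁ l₂, J (x - y) * U y)
        - d * U x * (∫ y in Ioo l₁ l₂, J (x - y) * 1) + U x * h x (U x)) / q)
      (Icc l₁ l₂) p := by
  have c1 := (continuous_conv J hJc hJnn hJbdd hUc).continuousWithinAt
    (s := Icc l₁ l₂) (x := p)
  have hone : ContinuousOn (fun _ : ℝ => (1:ℝ)) (Icc l₁ l₂) := continuousOn_const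
  have c2 := (continuous_conv J hJc hJnn hJbdd hone).continuousWithinAt
    (s := Icc l₁ l₂) (x := p)
  exact (((continuousWithinAt_const.mul c1).sub
    ((continuousWithinAt_const.mul (hUc p hp)).mul c2)).add
    ((hUc p hp).mul (contWithin_h hUc hUnn hhC hp))).div_const q

lemma tendsto_derivU (hl : l₁ < l₂) (hq : 0 < q) (hJc : Continuous J)
    (hJnn : ∀ x, 0 ≤ J x) (hJbdd : ∃ C, ∀ x, J x ≤ C)
    (hUc : ContinuousOn U (Icc l₁ l₂))
    (hUnn : ∀ x ∈ Icc l₁ l₂, 0 ≤ U x)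
    (hhC : ContinuousOn (fun p : ℝ × ℝ => h p.1 p.2) (Icc l₁ l₂ ×ˢ Ici 0))
    (hUeq : ∀ x ∈ Ioo l₁ l₂,
      d * (∫ y in Ioo l₁ l₂, J (x - y) * (U y - U x)) - q * deriv U x
        + U x * h x (U x) = 0)
    {p : ℝ} (hp : p ∈ Icc l₁ l₂) :
    Filter.Tendsto (deriv U) (nhdsWithin p (Ioo l₁ l₂))
      (nhds ((d * (∫ y in Ioo l₁ l₂, J (p - y) * U y)
        - d * U p * (∫ y in Ioo l₁ l₂, J (p - y) * 1) + U p * h p (U p)) / q)) :=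
  tendsto_deriv_of_eq hl (deriv_repr hq hJc hUc hUeq) hp
    (phiU_contWithin hJc hJnn hJbdd hUc hUnn hhC hp)

end sol2

section sol3
variable {l₁ l₂ d q : ℝ} {J : ℝ → ℝ} {h : ℝ → ℝ → ℝ} {U : ℝ → ℝ}

lemma J_pos_near (hJc : Continuous J) (hJ0 : 0 < J 0) :
    ∃ δ > 0, ∀ z : ℝ, |z| < δ → 0 < J z := by
  obtain ⟨δ, hδ, hJball⟩ := Metric.eventually_nhds_iff_ball.1
    ((hJc.continuousAt (x := 0)).eventually (eventually_gt_nhds hJ0))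
  exact ⟨δ, hδ, fun z hz => hJball z (by rwa [Metric.mem_ball, Real.dist_eq, sub_zero])⟩

lemma sol_pos_l₂ (hl : l₁ < l₂) (hd : 0 < d) (hq : 0 < q)
    (hJc : Continuous J) (hJnn : ∀ x, 0 ≤ J x) (hJ0 : 0 < J 0)
    (hJbdd : ∃ C, ∀ x, J x ≤ C)
    (hhC : ContinuousOn (fun p : ℝ × ℝ => h p.1 p.2) (Set.Icc l₁ l₂ ×ˢ Set.Ici 0))
    (hUc : ContinuousOn U (Icc l₁ l₂))
    (hUnn : ∀ x ∈ Icc l₁ l₂, 0 ≤ U x)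
    (hUd : ∀ x ∈ Ioo l₁ l₂, DifferentiableAt ℝ U x)
    (hUnt : ∃ x ∈ Icc l₁ l₂, U x ≠ 0)
    (hUeq : ∀ x ∈ Ioo l₁ l₂,
      d * (∫ y in Ioo l₁ l₂, J (x - y) * (U y - U x)) - q * deriv U x
        + U x * h x (U x) = 0) :
    0 < U l₂ := by
  have hUpos := sol_pos hl hd hq hJc hJnn hJ0 hUc hUnn hUd hUnt hUeq
  by_contra hc
  have hU2 : U l₂ = 0 := le_antisymm (not_lt.1 hc) (hUnn l₂ (right_mem_Icc.2 hl.le))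
  obtain ⟨δ, hδ, hJpos⟩ := J_pos_near hJc hJ0
  set y₀ : ℝ := max ((l₁ + l₂) / 2) (l₂ - δ / 2) with hy₀def
  have hy₀ : y₀ ∈ Ioo l₁ l₂ :=
    ⟨lt_max_of_lt_left (by linarith), max_lt (by linarith) (by linarith)⟩
  have hJy : 0 < J (l₂ - y₀) := by
    apply hJpos
    rw [abs_lt]
    have h1 : l₂ - δ / 2 ≤ y₀ := le_max_right _ _
    constructor <;> linarith [hy₀.2]
  have hCU : 0 < ∫ y in Ioo l₁ l₂, J (l₂ - y) * U y := by
    refine conv_pos hl ?_ ?_ hy₀ (mul_pos hJy (hUpos y₀ hy₀))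
    · exact ((hJc.comp (continuous_const.sub continuous_id)).continuousOn).mul hUc
    · exact fun z hz => mul_nonneg (hJnn _) (hUnn z (Ioo_subset_Icc_self hz))
  have ht := tendsto_derivU hl hq hJc hJnn hJbdd hUc hUnn hhC hUeq
    (right_mem_Icc.2 hl.le)
  rw [hU2] at ht
  simp only [mul_zero, zero_mul, sub_zero, add_zero] at ht
  exact no_zero_at_right hl hUc hUd hUpos hU2 (div_pos (mul_pos hd hCU) hq) ht

end sol3

set_option maxHeartbeats 2000000 in
lemma sol_le {l₁ l₂ d q : ℝ} {J : ℝ → ℝ} {h : ℝ → ℝ → ℝ}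
    (hl : l₁ < l₂) (hd : 0 < d) (hq : 0 < q)
    (hJc : Continuous J) (hJnn : ∀ x, 0 ≤ J x) (hJ0 : 0 < J 0)
    (hJbdd : ∃ C, ∀ x, J x ≤ C)
    (hhC : ContinuousOn (fun p : ℝ × ℝ => h p.1 p.2) (Set.Icc l₁ l₂ ×ˢ Set.Ici 0))
    (hhdec : ∀ x ∈ Set.Icc l₁ l₂, StrictAntiOn (fun u => h x u) (Set.Ici 0))
    {U V : ℝ → ℝ}
    (hU : NeumannStatSol l₁ l₂ d q J h U) (hV : NeumannStatSol l₁ l₂ d q J h V) :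
    ∀ x ∈ Icc l₁ l₂, V x ≤ U x := by
  obtain ⟨hUc, hUb, hUnn, hUd, hUnt, hU0, hUeq⟩ := hU
  obtain ⟨hVc, hVb, hVnn, hVd, hVnt, hV0, hVeq⟩ := hV
  have hUpos := sol_pos hl hd hq hJc hJnn hJ0 hUc hUnn hUd hUnt hUeq
  have hVpos := sol_pos hl hd hq hJc hJnn hJ0 hVc hVnn hVd hVnt hVeq
  have hUl₂ := sol_pos_l₂ hl hd hq hJc hJnn hJ0 hJbdd hhC hUc hUnn hUd hUnt hUeq
  have hUpos' : ∀ x ∈ Ioc l₁ l₂, 0 < U x := by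
    intro x hx
    rcases eq_or_lt_of_le hx.2 with he | hlt
    · rw [he]; exact hUl₂
    · exact hUpos x ⟨hx.1, hlt⟩
  obtain ⟨δJ, hδJ, hJpos⟩ := J_pos_near hJc hJ0
  -- the touching point at l₁
  set y₁ : ℝ := min ((l₁ + l₂) / 2) (l₁ + δJ / 2) with hy₁def
  have hy₁ : y₁ ∈ Ioo l₁ l₂ :=
    ⟨lt_min (by linarith) (by linarith), min_lt_of_left_lt (by linarith)⟩
  have hJy₁ : 0 < J (l₁ - y₁) := by
    apply hJpos
    rw [abs_lt]
    have h1 : y₁ ≤ l₁ + δJ / 2 := min_le_right _ _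
    constructor <;> linarith [hy₁.1]
  have hconvc : ∀ f : ℝ → ℝ, ContinuousOn f (Icc l₁ l₂) → ∀ x : ℝ,
      ContinuousOn (fun y => J (x - y) * f y) (Icc l₁ l₂) := fun f hf x =>
    ((hJc.comp (continuous_const.sub continuous_id)).continuousOn).mul hf
  have hCUl₁ : 0 < ∫ y in Ioo l₁ l₂, J (l₁ - y) * U y := by
    refine conv_pos hl (hconvc U hUc l₁) ?_ hy₁ (mul_pos hJy₁ (hUpos y₁ hy₁))
    exact fun z hz => mul_nonneg (hJnn _) (hUnn z (Ioo_subset_Icc_self hz))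
  have hCVl₁ : 0 ≤ ∫ y in Ioo l₁ l₂, J (l₁ - y) * V y :=
    setIntegral_nonneg measurableSet_Ioo
      (fun z hz => mul_nonneg (hJnn _) (hVnn z (Ioo_subset_Icc_self hz)))
  -- limits of derivatives at l₁
  have htU₁ : Filter.Tendsto (deriv U) (nhdsWithin l₁ (Ioo l₁ l₂))
      (nhds ((d * ∫ y in Ioo l₁ l₂, J (l₁ - y) * U y) / q)) := by
    have ht := tendsto_derivU hl hq hJc hJnn hJbdd hUc hUnn hhC hUeq
      (left_mem_Icc.2 hl.le)
    rw [hU0] at ht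
    simpa using ht
  have htV₁ : Filter.Tendsto (deriv V) (nhdsWithin l₁ (Ioo l₁ l₂))
      (nhds ((d * ∫ y in Ioo l₁ l₂, J (l₁ - y) * V y) / q)) := by
    have ht := tendsto_derivU hl hq hJc hJnn hJbdd hVc hVnn hhC hVeq
      (left_mem_Icc.2 hl.le)
    rw [hV0] at ht
    simpa using ht
  set A : ℝ := (d * ∫ y in Ioo l₁ l₂, J (l₁ - y) * U y) / q with hAdef
  have hA : 0 < A := div_pos (mul_pos hd hCUl₁) hq
  set B0 : ℝ := (d * ∫ y in Ioo l₁ l₂, J (l₁ - y) * V y) / q with hB0def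
  have hB0 : 0 ≤ B0 := div_nonneg (mul_nonneg hd.le hCVl₁) hq.le
  obtain ⟨δ₁, hδ₁, hUbnd⟩ := linear_bounds hl hUc hUd hU0 htU₁ (ε := A / 2) (by linarith)
  obtain ⟨δ₂, hδ₂, hVbnd⟩ := linear_bounds hl hVc hVd hV0 htV₁ (ε := 1) one_pos
  -- ratio bounded above
  set M₁ : ℝ := (B0 + 1) * 2 / A with hM₁def
  have hM₁nn : 0 ≤ M₁ := by positivity
  have hM₁A : M₁ * (A / 2) = B0 + 1 := by
    rw [hM₁def]; field_simp
  have hratio₁ : ∀ x ∈ Ioo l₁ l₂, x - l₁ < min δ₁ δ₂ → V x ≤ M₁ * U x := by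
    intro x hx hxδ
    have h1 := (hUbnd x hx (lt_of_lt_of_le hxδ (min_le_left _ _))).1
    have h2 := (hVbnd x hx (lt_of_lt_of_le hxδ (min_le_right _ _))).2
    have hxl : 0 < x - l₁ := by linarith [hx.1]
    have h3 : M₁ * ((A - A / 2) * (x - l₁)) ≤ M₁ * U x :=
      mul_le_mul_of_nonneg_left h1 hM₁nn
    nlinarith
  -- compact upper bound for the ratio
  have hruIcc : ∀ a, l₁ < a → ∃ M₂, ∀ x ∈ Icc a l₂, V x / U x ≤ M₂ := by
    intro a ha
    by_cases hal : a ≤ l₂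
    · have hsub : Icc a l₂ ⊆ Icc l₁ l₂ := Icc_subset_Icc ha.le le_rfl
      have hcont : ContinuousOn (fun x => V x / U x) (Icc a l₂) :=
        (hVc.mono hsub).div (hUc.mono hsub)
          (fun x hx => ne_of_gt (hUpos' x ⟨lt_of_lt_of_le ha hx.1, hx.2⟩))
      obtain ⟨M₂, hM₂⟩ := isCompact_Icc.exists_bound_of_continuousOn hcont
      exact ⟨M₂, fun x hx => le_trans (le_abs_self _) (hM₂ x hx)⟩
    · exact ⟨0, fun x hx => absurd (hx.1.trans hx.2) hal⟩
  obtain ⟨M₂, hM₂⟩ := hruIcc (l₁ + min (min δ₁ δ₂) (l₂ - l₁) / 2)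
    (by have := lt_min (lt_min hδ₁ hδ₂) (show (0:ℝ) < l₂ - l₁ by linarith); linarith)
  set R : Set ℝ := (fun x => V x / U x) '' Ioc l₁ l₂ with hRdef
  have hRne : R.Nonempty := ⟨V l₂ / U l₂, mem_image_of_mem _ (right_mem_Ioc.2 hl)⟩
  have hRbdd : BddAbove R := by
    refine ⟨max M₁ M₂, ?_⟩
    rintro r ⟨x, hx, rfl⟩
    by_cases hxa : x < l₁ + min (min δ₁ δ₂) (l₂ - l₁) / 2
    · have hxne : x ≠ l₂ := by
        intro he
        rw [he] at hxa
        have h5 : min (min δ₁ δ₂) (l₂ - l₁) ≤ l₂ - l₁ := min_le_right _ _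
        linarith
      have hxIoo : x ∈ Ioo l₁ l₂ := ⟨hx.1, hx.2.lt_of_ne hxne⟩
      have hxδ : x - l₁ < min δ₁ δ₂ := by
        have h5 : min (min δ₁ δ₂) (l₂ - l₁) ≤ min δ₁ δ₂ := min_le_left _ _
        have h6 := lt_min (lt_min hδ₁ hδ₂) (show (0:ℝ) < l₂ - l₁ by linarith)
        linarith
      have := hratio₁ x hxIoo hxδ
      exact le_max_of_le_left ((div_le_iff₀ (hUpos x hxIoo)).2 this)
    · exact le_max_of_le_right (hM₂ x ⟨not_lt.1 hxa, hx.2⟩)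
  set K : ℝ := sSup R with hKdef
  have hKge : ∀ x ∈ Ioc l₁ l₂, V x / U x ≤ K :=
    fun x hx => le_csSup hRbdd (mem_image_of_mem _ hx)
  have hVleK : ∀ x ∈ Ioc l₁ l₂, V x ≤ K * U x :=
    fun x hx => (div_le_iff₀ (hUpos' x hx)).1 (hKge x hx)
  by_cases hK1 : K ≤ 1
  · intro x hx
    rcases eq_or_lt_of_le hx.1 with he | hlt
    · rw [← he, hU0, hV0]
    · calc V x ≤ K * U x := hVleK x ⟨hlt, hx.2⟩
        _ ≤ 1 * U x := mul_le_mul_of_nonneg_right hK1 (hUnn x hx)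
        _ = U x := one_mul _
  · exfalso
    push_neg at hK1
    set W : ℝ → ℝ := fun x => K * U x - V x with hWdef
    have hWc : ContinuousOn W (Icc l₁ l₂) := (continuousOn_const.mul hUc).sub hVc
    have hWd : ∀ x ∈ Ioo l₁ l₂, DifferentiableAt ℝ W x :=
      fun x hx => ((hUd x hx).const_mul K).sub (hVd x hx)
    have hW0 : W l₁ = 0 := by simp only [hWdef]; rw [hU0, hV0]; ring
    have hWnn : ∀ x ∈ Icc l₁ l₂, 0 ≤ W x := by
      intro x hx
      rcases eq_or_lt_of_le hx.1 with he | hlt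
      · rw [← he, hW0]
      · simp only [hWdef]; linarith [hVleK x ⟨hlt, hx.2⟩]
    have hderivW : ∀ x ∈ Ioo l₁ l₂, deriv W x = K * deriv U x - deriv V x := by
      intro x hx
      simp only [hWdef]
      rw [deriv_fun_sub ((hUd x hx).const_mul K) (hVd x hx), deriv_const_mul K (hUd x hx)]
    have hreprW : ∀ x ∈ Ioo l₁ l₂, deriv W x =
        (d * (K * (∫ y in Ioo l₁ l₂, J (x - y) * U y)
            - ∫ y in Ioo l₁ l₂, J (x - y) * V y)
          - d * W x * (∫ y in Ioo l₁ l₂, J (x - y) * 1)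
          + (K * (U x * h x (U x)) - V x * h x (V x))) / q := by
      intro x hx
      rw [hderivW x hx, deriv_repr hq hJc hUc hUeq x hx,
        deriv_repr hq hJc hVc hVeq x hx]
      simp only [hWdef]
      field_simp
      ring
    have hΦWc : ∀ p ∈ Icc l₁ l₂, ContinuousWithinAt (fun x =>
        (d * (K * (∫ y in Ioo l₁ l₂, J (x - y) * U y)
            - ∫ y in Ioo l₁ l₂, J (x - y) * V y)
          - d * W x * (∫ y in Ioo l₁ l₂, J (x - y) * 1)
          + (K * (U x * h x (U x)) - V x * h x (V x))) / q) (Icc l₁ l₂) p := by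
      intro p hp
      have c1 := (continuous_conv J hJc hJnn hJbdd hUc).continuousWithinAt
        (s := Icc l₁ l₂) (x := p)
      have c2 := (continuous_conv J hJc hJnn hJbdd hVc).continuousWithinAt
        (s := Icc l₁ l₂) (x := p)
      have hone : ContinuousOn (fun _ : ℝ => (1:ℝ)) (Icc l₁ l₂) := continuousOn_const
      have c3 := (continuous_conv J hJc hJnn hJbdd hone).continuousWithinAt
        (s := Icc l₁ l₂) (x := p)
      have cW : ContinuousWithinAt W (Icc l₁ l₂) p := hWc p hp
      have chU := contWithin_h hUc hUnn hhC hp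
      have chV := contWithin_h hVc hVnn hhC hp
      exact (((continuousWithinAt_const.mul
        ((continuousWithinAt_const.mul c1).sub c2)).sub
        ((continuousWithinAt_const.mul cW).mul c3)).add
        ((continuousWithinAt_const.mul ((hUc p hp).mul chU)).sub
          ((hVc p hp).mul chV))).div_const q
    by_cases hzero : ∃ x₀ ∈ Ioo l₁ l₂, W x₀ = 0
    · -- interior touching point: contradiction with strict monotonicity of h
      obtain ⟨x₀, hx₀, hWx₀⟩ := hzero
      have hmin : IsLocalMin W x₀ := by
        filter_upwards [Icc_mem_nhds hx₀.1 hx₀.2] with y hy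
        rw [hWx₀]; exact hWnn y hy
      have hdW := hmin.deriv_eq_zero
      have hrep := hreprW x₀ hx₀
      rw [hdW, hWx₀] at hrep
      have hWx₀' : K * U x₀ - V x₀ = 0 := by
        have := hWx₀; simp only [hWdef] at this; exact this
      have hVx₀ : V x₀ = K * U x₀ := by linarith
      have hUx₀ := hUpos x₀ hx₀
      have hUVx₀ : U x₀ < V x₀ := by rw [hVx₀]; nlinarith
      have hhx : h x₀ (V x₀) < h x₀ (U x₀) :=
        hhdec x₀ (Ioo_subset_Icc_self hx₀) (hUnn x₀ (Ioo_subset_Icc_self hx₀))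
          (hVnn x₀ (Ioo_subset_Icc_self hx₀)) hUVx₀
      have hterm : 0 < K * (U x₀ * h x₀ (U x₀)) - V x₀ * h x₀ (V x₀) := by
        have he : K * (U x₀ * h x₀ (U x₀)) = V x₀ * h x₀ (U x₀) := by
          rw [hVx₀]; ring
        rw [he]
        have hVpos₀ := hVpos x₀ hx₀
        nlinarith
      have hiterm : 0 ≤ K * (∫ y in Ioo l₁ l₂, J (x₀ - y) * U y)
          - ∫ y in Ioo l₁ l₂, J (x₀ - y) * V y := by
        rw [← conv_linear J hJc hUc hVc K x₀]
        refine setIntegral_nonneg measurableSet_Ioo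
          (fun y hy => mul_nonneg (hJnn _) ?_)
        have := hWnn y (Ioo_subset_Icc_self hy)
        simpa only [hWdef] using this
      rw [eq_comm, div_eq_iff (ne_of_gt hq)] at hrep
      linarith [mul_nonneg hd.le hiterm, hterm]
    · push_neg at hzero
      have hWpos : ∀ x ∈ Ioo l₁ l₂, 0 < W x :=
        fun x hx => lt_of_le_of_ne (hWnn x (Ioo_subset_Icc_self hx))
          (Ne.symm (hzero x hx))
      by_cases hWl₂ : W l₂ = 0
      · -- touching at the right endpoint
        have htWl₂ : Filter.Tendsto (deriv W) (nhdsWithin l₂ (Ioo l₁ l₂))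
            (nhds ((d * (K * (∫ y in Ioo l₁ l₂, J (l₂ - y) * U y)
            - ∫ y in Ioo l₁ l₂, J (l₂ - y) * V y)
          - d * W l₂ * (∫ y in Ioo l₁ l₂, J (l₂ - y) * 1)
          + (K * (U l₂ * h l₂ (U l₂)) - V l₂ * h l₂ (V l₂))) / q)) :=
          tendsto_deriv_of_eq hl hreprW (right_mem_Icc.2 hl.le)
            (hΦWc l₂ (right_mem_Icc.2 hl.le))
        have hWl₂' : K * U l₂ - V l₂ = 0 := by
          have := hWl₂; simp only [hWdef] at this; exact this
        have hVl₂K : V l₂ = K * U l₂ := by linarith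
        have hUVl₂ : U l₂ < V l₂ := by rw [hVl₂K]; nlinarith
        have hhx : h l₂ (V l₂) < h l₂ (U l₂) :=
          hhdec l₂ (right_mem_Icc.2 hl.le) (hUnn l₂ (right_mem_Icc.2 hl.le))
            (hVnn l₂ (right_mem_Icc.2 hl.le)) hUVl₂
        have hterm : 0 < K * (U l₂ * h l₂ (U l₂)) - V l₂ * h l₂ (V l₂) := by
          have he : K * (U l₂ * h l₂ (U l₂)) = V l₂ * h l₂ (U l₂) := by
            rw [hVl₂K]; ring
          rw [he]
          have hVpos₂ : 0 < V l₂ := by rw [hVl₂K]; nlinarith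
          nlinarith
        have hiterm : 0 ≤ K * (∫ y in Ioo l₁ l₂, J (l₂ - y) * U y)
            - ∫ y in Ioo l₁ l₂, J (l₂ - y) * V y := by
          rw [← conv_linear J hJc hUc hVc K l₂]
          refine setIntegral_nonneg measurableSet_Ioo
            (fun y hy => mul_nonneg (hJnn _) ?_)
          have := hWnn y (Ioo_subset_Icc_self hy)
          simpa only [hWdef] using this
        have hL : 0 < (d * (K * (∫ y in Ioo l₁ l₂, J (l₂ - y) * U y)
            - ∫ y in Ioo l₁ l₂, J (l₂ - y) * V y)
          - d * W l₂ * (∫ y in Ioo l₁ l₂, J (l₂ - y) * 1)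
          + (K * (U l₂ * h l₂ (U l₂)) - V l₂ * h l₂ (V l₂))) / q := by
          rw [hWl₂]
          apply div_pos ?_ hq
          linarith [mul_nonneg hd.le hiterm, hterm]
        exact no_zero_at_right hl hWc hWd hWpos hWl₂ hL htWl₂
      · -- W is positive on (l₁, l₂]; improve the constant K
        have hWl₂pos : 0 < W l₂ :=
          lt_of_le_of_ne (hWnn l₂ (right_mem_Icc.2 hl.le)) (Ne.symm hWl₂)
        have hWpos' : ∀ x ∈ Ioc l₁ l₂, 0 < W x := by
          intro x hx
          rcases eq_or_lt_of_le hx.2 with he | hlt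
          · rw [he]; exact hWl₂pos
          · exact hWpos x ⟨hx.1, hlt⟩
        set L₁ : ℝ := (d * (K * (∫ y in Ioo l₁ l₂, J (l₁ - y) * U y)
            - ∫ y in Ioo l₁ l₂, J (l₁ - y) * V y)
          - d * W l₁ * (∫ y in Ioo l₁ l₂, J (l₁ - y) * 1)
          + (K * (U l₁ * h l₁ (U l₁)) - V l₁ * h l₁ (V l₁))) / q with hL₁def
        have htWl₁ : Filter.Tendsto (deriv W) (nhdsWithin l₁ (Ioo l₁ l₂)) (nhds L₁) :=
          tendsto_deriv_of_eq hl hreprW (left_mem_Icc.2 hl.le)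
            (hΦWc l₁ (left_mem_Icc.2 hl.le))
        have hiterm₁ : K * (∫ y in Ioo l₁ l₂, J (l₁ - y) * U y)
            - (∫ y in Ioo l₁ l₂, J (l₁ - y) * V y)
            = ∫ y in Ioo l₁ l₂, J (l₁ - y) * (K * U y - V y) :=
          (conv_linear J hJc hUc hVc K l₁).symm
        have hipos : 0 < ∫ y in Ioo l₁ l₂, J (l₁ - y) * (K * U y - V y) := by
          refine conv_pos hl (hconvc (fun y => K * U y - V y)
            ((continuousOn_const.mul hUc).sub hVc) l₁) ?_ hy₁
            (mul_pos hJy₁ ?_)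
          · intro z hz
            refine mul_nonneg (hJnn _) ?_
            have := hWnn z (Ioo_subset_Icc_self hz)
            simpa only [hWdef] using this
          · have := hWpos y₁ hy₁
            simpa only [hWdef] using this
        have hL₁pos : 0 < L₁ := by
          rw [hL₁def, hW0, hU0, hV0]
          apply div_pos ?_ hq
          rw [hiterm₁]
          simp only [mul_zero, zero_mul, sub_zero, add_zero]
          exact mul_pos hd hipos
        obtain ⟨δ₄, hδ₄, hWbnd⟩ := linear_bounds hl hWc hWd hW0 htWl₁
          (ε := L₁ / 2) (by linarith)
        set ε₁ : ℝ := L₁ / (3 * A) with hε₁def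
        have hε₁pos : 0 < ε₁ := div_pos hL₁pos (by linarith)
        have hkey₁ : ∀ x ∈ Ioo l₁ l₂, x - l₁ < min δ₁ δ₄ → V x / U x ≤ K - ε₁ := by
          intro x hx hxδ
          have hUx := hUpos x hx
          have hUup := (hUbnd x hx (lt_of_lt_of_le hxδ (min_le_left _ _))).2
          have hWlow := (hWbnd x hx (lt_of_lt_of_le hxδ (min_le_right _ _))).1
          rw [div_le_iff₀ hUx]
          have hWx : W x = K * U x - V x := by simp only [hWdef]
          have he : ε₁ * (A + A / 2) = L₁ / 2 := by
            rw [hε₁def]; field_simp; ring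
          nlinarith [mul_le_mul_of_nonneg_left hUup (le_of_lt hε₁pos)]
        set a : ℝ := l₁ + min (min δ₁ δ₄) (l₂ - l₁) / 2 with hadef
        have hminpos : 0 < min (min δ₁ δ₄) (l₂ - l₁) :=
          lt_min (lt_min hδ₁ hδ₄) (by linarith)
        have hal₁ : l₁ < a := by rw [hadef]; linarith
        have hal₂ : a < l₂ := by
          rw [hadef]
          have := min_le_right (min δ₁ δ₄) (l₂ - l₁)
          linarith
        have hsub : Icc a l₂ ⊆ Icc l₁ l₂ := Icc_subset_Icc hal₁.le le_rfl
        have hcont : ContinuousOn (fun x => W x / U x) (Icc a l₂) :=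
          (hWc.mono hsub).div (hUc.mono hsub)
            (fun x hx => ne_of_gt (hUpos' x ⟨lt_of_lt_of_le hal₁ hx.1, hx.2⟩))
        obtain ⟨xm, hxm, hminOn⟩ := isCompact_Icc.exists_isMinOn
          (nonempty_Icc.2 hal₂.le) hcont
        have hxmIoc : xm ∈ Ioc l₁ l₂ := ⟨lt_of_lt_of_le hal₁ hxm.1, hxm.2⟩
        set m : ℝ := W xm / U xm with hmdef
        have hmpos : 0 < m := div_pos (hWpos' xm hxmIoc) (hUpos' xm hxmIoc)
        have hkey₂ : ∀ x ∈ Icc a l₂, V x / U x ≤ K - m := by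
          intro x hx
          have hxIoc : x ∈ Ioc l₁ l₂ := ⟨lt_of_lt_of_le hal₁ hx.1, hx.2⟩
          have hUx := hUpos' x hxIoc
          have h1 : m ≤ W x / U x := isMinOn_iff.1 hminOn x hx
          have h2 : V x / U x = K - W x / U x := by
            have hWx : W x = K * U x - V x := by simp only [hWdef]
            rw [hWx]
            field_simp
            ring
          rw [h2]; linarith
        have hε₂pos : 0 < min ε₁ m := lt_min hε₁pos hmpos
        have hub : ∀ r ∈ R, r ≤ K - min ε₁ m := by
          rintro r ⟨x, hx, rfl⟩
          by_cases hxa : x < a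
          · have hxIoo : x ∈ Ioo l₁ l₂ := ⟨hx.1, lt_trans hxa hal₂⟩
            have hxδ : x - l₁ < min δ₁ δ₄ := by
              have h5 := min_le_left (min δ₁ δ₄) (l₂ - l₁)
              rw [hadef] at hxa
              have h6 := lt_min hδ₁ hδ₄
              linarith
            have := hkey₁ x hxIoo hxδ
            have h7 := min_le_left ε₁ m
            simp only []
            linarith
          · have := hkey₂ x ⟨not_lt.1 hxa, hx.2⟩
            have h7 := min_le_right ε₁ m
            simp only []
            linarith
        have hfin : K ≤ K - min ε₁ m := csSup_le hRne hub
        linarith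

/-- **Uniqueness of the nontrivial stationary solution (Neumann case).**
The Neumann stationary problem has at most one nontrivial solution. -/
theorem neumann_stationary_uniqueness
    (l₁ l₂ d q : ℝ) (J : ℝ → ℝ) (h : ℝ → ℝ → ℝ)
    (hl : l₁ < l₂) (hd : 0 < d) (hq : 0 < q)
    -- condition (J)
    (hJc : Continuous J) (hJnn : ∀ x, 0 ≤ J x) (hJ0 : 0 < J 0)
    (hJint : MeasureTheory.Integrable J) (hJ1 : (∫ x, J x) = 1)
    -- condition (J1)
    (hJsymm : ∀ x, J (-x) = J x) (hJbdd : ∃ C, ∀ x, J x ≤ C)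
    -- KPP nonlinearity
    (hhC1 : ContDiffOn ℝ 1 (fun p : ℝ × ℝ => h p.1 p.2) (Set.Icc l₁ l₂ ×ˢ Set.Ici 0))
    (hhdec : ∀ x ∈ Set.Icc l₁ l₂, StrictAntiOn (fun u => h x u) (Set.Ici 0))
    (hhN : ∃ N > 0, ∀ x ∈ Set.Icc l₁ l₂, ∀ u > N, h x u < 0) :
    ∀ U₁ U₂, NeumannStatSol l₁ l₂ d q J h U₁ → NeumannStatSol l₁ l₂ d q J h U₂ →
      ∀ x ∈ Set.Icc l₁ l₂, U₁ x = U₂ x := by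
  have hhCont : ContinuousOn (fun p : ℝ × ℝ => h p.1 p.2)
      (Set.Icc l₁ l₂ ×ˢ Set.Ici 0) := hhC1.continuousOn
  intro U₁ U₂ h₁ h₂ x hx
  exact le_antisymm
    (sol_le hl hd hq hJc hJnn hJ0 hJbdd hhCont hhdec h₂ h₁ x hx)
    (sol_le hl hd hq hJc hJnn hJ0 hJbdd hhCont hhdec h₁ h₂ x hx)
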